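/- Let q ≥ 2 and n₁, n₂, n₃ positive natural numbers with gcd(n₁, n₂, n₃) = 1. Then Z_{q^{n₁}-1} × Z_{q^{n₂}-1} × Z_{q^{n₃}-1} is isomorphic to Z_{q-1} × Z_{lcm(q^{n₁}-1, q^{gcd(n₂,n₃)}-1)} × Z_{lcm(q^{n₂}-1, q^{n₃}-1)}. -/
import Mathlib

open Nat Finsupp

section aux

variable {m n p : ℕ}

lemma aux_prime_dvd_iteprod {F : ℕ →₀ ℕ} {c : ℕ → Prop} [DecidablePred c] {p : ℕ}
    (pp : p.Prime) (hF : ∀ q ∈ F.support, q.Prime) :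
    p ∣ (F.prod fun q e => if c q then q ^ e else 1) ↔ (p ∈ F.support ∧ c p) := by
  rw [Finsupp.prod, pp.prime.dvd_finset_prod_iff]
  constructor
  · rintro ⟨q, hq, hdvd⟩
    by_cases hc : c q
    · rw [if_pos hc] at hdvd
      have hpq : p = q :=
        (Nat.prime_dvd_prime_iff_eq pp (hF q hq)).mp (pp.dvd_of_dvd_pow hdvd)
      subst hpq; exact ⟨hq, hc⟩
    · rw [if_neg hc] at hdvd
      exact absurd (Nat.eq_one_of_dvd_one hdvd) pp.ne_one
  · rintro ⟨hp, hc⟩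
    refine ⟨p, hp, ?_⟩
    rw [if_pos hc]
    exact dvd_pow_self p (Finsupp.mem_support_iff.mp hp)

lemma aux_pow_dvd_iteprod {F : ℕ →₀ ℕ} {c : ℕ → Prop} [DecidablePred c] {p : ℕ}
    (hp : p ∈ F.support) (hc : c p) :
    p ^ F p ∣ (F.prod fun q e => if c q then q ^ e else 1) := by
  rw [Finsupp.prod]
  have := Finset.dvd_prod_of_mem (fun q => if c q then q ^ F q else 1) hp
  simpa only [if_pos hc] using this

lemma aux_primes_supp (hm : m ≠ 0) (hn : n ≠ 0) :
    ∀ q ∈ (Nat.lcm m n).factorization.support, q.Prime := by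
  intro q hq
  rw [Nat.support_factorization] at hq
  exact Nat.prime_of_mem_primeFactors hq

lemma aux_LCMRight_eq (m n : ℕ) :
    Nat.factorizationLCMRight m n = (Nat.lcm m n).factorization.prod
      fun q e => if ¬ (n.factorization q ≤ m.factorization q) then q ^ e else 1 := by
  rw [Nat.factorizationLCMRight]
  exact Finsupp.prod_congr fun q _ => by rw [ite_not]

lemma aux_dvd_LCMLeft_iff (hm : m ≠ 0) (hn : n ≠ 0) (pp : p.Prime) :
    p ∣ Nat.factorizationLCMLeft m n ↔
      (p ∈ (Nat.lcm m n).factorization.support ∧ n.factorization p ≤ m.factorization p) := by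
  rw [Nat.factorizationLCMLeft]
  exact aux_prime_dvd_iteprod pp (aux_primes_supp hm hn)

lemma aux_dvd_LCMRight_iff (hm : m ≠ 0) (hn : n ≠ 0) (pp : p.Prime) :
    p ∣ Nat.factorizationLCMRight m n ↔
      (p ∈ (Nat.lcm m n).factorization.support ∧
        ¬ (n.factorization p ≤ m.factorization p)) := by
  rw [aux_LCMRight_eq]
  exact aux_prime_dvd_iteprod pp (aux_primes_supp hm hn)

lemma aux_full_exponent (hm : m ≠ 0) (hn : n ≠ 0) {L a : ℕ} (hL0 : L ≠ 0)
    (hLa : m = L * a)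
    (hdvd : ∀ p : ℕ, p.Prime → p ∣ L → (Nat.lcm m n).factorization p ≤ L.factorization p) :
    Nat.Coprime L a := by
  have ha0 : a ≠ 0 := by rintro rfl; exact hm (by simp [hLa])
  by_contra h
  obtain ⟨p, pp, hpd⟩ := Nat.exists_prime_and_dvd h
  have hpL : p ∣ L := hpd.trans (Nat.gcd_dvd_left _ _)
  have hpa : p ∣ a := hpd.trans (Nat.gcd_dvd_right _ _)
  have h1 : (Nat.lcm m n).factorization p ≤ L.factorization p := hdvd p pp hpL
  have h2 : L.factorization p + a.factorization p = m.factorization p := by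
    rw [hLa, Nat.factorization_mul hL0 ha0]; rfl
  have h3 : m.factorization p ≤ (Nat.lcm m n).factorization p := by
    have := (Nat.factorization_le_iff_dvd hm (Nat.lcm_ne_zero hm hn)).mpr
      (Nat.dvd_lcm_left m n)
    exact this p
  have h4 : 1 ≤ a.factorization p := pp.factorization_pos_of_dvd ha0 hpa
  omega

lemma aux_coprime_LCMLeft (hm : m ≠ 0) (hn : n ≠ 0) :
    Nat.Coprime (Nat.factorizationLCMLeft m n) (m / Nat.factorizationLCMLeft m n) := by
  have hdvd := Nat.factorizationLCMLeft_dvd_left m n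
  have hL0 : Nat.factorizationLCMLeft m n ≠ 0 := fun h => hm (by
    have := hdvd; rw [h] at this; exact Nat.eq_zero_of_zero_dvd this)
  refine aux_full_exponent hm hn hL0 (Nat.mul_div_cancel' hdvd).symm ?_
  intro p pp hpL
  obtain ⟨hsupp, hc⟩ := (aux_dvd_LCMLeft_iff hm hn pp).mp hpL
  have hLdef : Nat.factorizationLCMLeft m n = (Nat.lcm m n).factorization.prod
      (fun q e => if n.factorization q ≤ m.factorization q then q ^ e else 1) := rfl
  have := aux_pow_dvd_iteprod (F := (Nat.lcm m n).factorization)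
    (c := fun q => n.factorization q ≤ m.factorization q) hsupp hc
  rw [← hLdef] at this
  exact (pp.pow_dvd_iff_le_factorization hL0).mp this

lemma aux_coprime_LCMRight (hm : m ≠ 0) (hn : n ≠ 0) :
    Nat.Coprime (Nat.factorizationLCMRight m n) (n / Nat.factorizationLCMRight m n) := by
  have hdvd := Nat.factorizationLCMRight_dvd_right m n
  have hR0 : Nat.factorizationLCMRight m n ≠ 0 := fun h => hn (by
    have := hdvd; rw [h] at this; exact Nat.eq_zero_of_zero_dvd this)
  refine aux_full_exponent hn hm hR0 (Nat.mul_div_cancel' hdvd).symm ?_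
  intro p pp hpR
  obtain ⟨hsupp, hc⟩ := (aux_dvd_LCMRight_iff hm hn pp).mp hpR
  have := aux_pow_dvd_iteprod (F := (Nat.lcm m n).factorization)
    (c := fun q => ¬ (n.factorization q ≤ m.factorization q)) hsupp hc
  rw [← aux_LCMRight_eq] at this
  rw [Nat.lcm_comm n m]
  exact (pp.pow_dvd_iff_le_factorization hR0).mp this

/-- The key lemma: `ZMod m × ZMod n ≃+ ZMod (gcd m n) × ZMod (lcm m n)`. -/
lemma aux_key (m n : ℕ) (hm : m ≠ 0) (hn : n ≠ 0) :
    Nonempty (ZMod m × ZMod n ≃+ ZMod (Nat.gcd m n) × ZMod (Nat.lcm m n)) := by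
  set L := Nat.factorizationLCMLeft m n with hLdef
  set R := Nat.factorizationLCMRight m n with hRdef
  have hLm : L ∣ m := Nat.factorizationLCMLeft_dvd_left m n
  have hRn : R ∣ n := Nat.factorizationLCMRight_dvd_right m n
  have hL0 : L ≠ 0 := fun h => hm (by rw [h] at hLm; exact Nat.eq_zero_of_zero_dvd hLm)
  have hR0 : R ≠ 0 := fun h => hn (by rw [h] at hRn; exact Nat.eq_zero_of_zero_dvd hRn)
  have cLa : Nat.Coprime L (m / L) := aux_coprime_LCMLeft hm hn
  have cRb : Nat.Coprime R (n / R) := aux_coprime_LCMRight hm hn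
  have cLR : Nat.Coprime L R := Nat.coprime_factorizationLCMLeft_factorizationLCMRight m n
  have hlcm : L * R = Nat.lcm m n := Nat.factorizationLCMLeft_mul_factorizationLCMRight hm hn
  set a := m / L with hadef
  set b := n / R with hbdef
  have hma : m = L * a := (Nat.mul_div_cancel' hLm).symm
  have hnb : n = R * b := (Nat.mul_div_cancel' hRn).symm
  have ha0 : a ≠ 0 := fun h => hm (by rw [hma, h, mul_zero])
  have hb0 : b ≠ 0 := fun h => hn (by rw [hnb, h, mul_zero])
  -- coprimality of a and b
  have cab : Nat.Coprime a b := by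
    by_contra h
    obtain ⟨p, pp, hpd⟩ := Nat.exists_prime_and_dvd h
    have hpa : p ∣ a := hpd.trans (Nat.gcd_dvd_left _ _)
    have hpb : p ∣ b := hpd.trans (Nat.gcd_dvd_right _ _)
    have hpsupp : p ∈ (Nat.lcm m n).factorization.support := by
      rw [Nat.support_factorization, Nat.mem_primeFactors]
      exact ⟨pp, (hpa.trans (Nat.div_dvd_of_dvd hLm)).trans (Nat.dvd_lcm_left m n),
        Nat.lcm_ne_zero hm hn⟩
    by_cases hc : n.factorization p ≤ m.factorization p
    · have hpL : p ∣ L := (aux_dvd_LCMLeft_iff hm hn pp).mpr ⟨hpsupp, hc⟩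
      exact pp.ne_one (Nat.eq_one_of_dvd_one (cLa ▸ Nat.dvd_gcd hpL hpa))
    · have hpR : p ∣ R := (aux_dvd_LCMRight_iff hm hn pp).mpr ⟨hpsupp, hc⟩
      exact pp.ne_one (Nat.eq_one_of_dvd_one (cRb ▸ Nat.dvd_gcd hpR hpb))
  -- gcd m n = a * b
  have hgcd : Nat.gcd m n = a * b := by
    have h1 : Nat.gcd m n * Nat.lcm m n = (a * b) * Nat.lcm m n := by
      rw [Nat.gcd_mul_lcm, ← hlcm, hma, hnb]; ring
    exact Nat.eq_of_mul_eq_mul_right (Nat.pos_of_ne_zero (Nat.lcm_ne_zero hm hn)) h1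
  rw [hgcd, ← hlcm, hma, hnb]
  exact ⟨((((ZMod.chineseRemainder cLa).toAddEquiv.prodCongr
      (ZMod.chineseRemainder cRb).toAddEquiv).trans
      (AddEquiv.prodProdProdComm _ _ _ _)).trans
      AddEquiv.prodComm).trans
      (((ZMod.chineseRemainder cab).toAddEquiv.symm).prodCongr
        ((ZMod.chineseRemainder cLR).toAddEquiv.symm))⟩

/-- `gcd (q^m - 1) (q^n - 1) = q^(gcd m n) - 1`. -/
lemma aux_gcd_pow_sub_one (q : ℕ) (hq : 2 ≤ q) :
    ∀ m n : ℕ, Nat.gcd (q ^ m - 1) (q ^ n - 1) = q ^ Nat.gcd m n - 1 := by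
  intro m
  induction m using Nat.strong_induction_on with
  | _ m ih =>
    intro n
    rcases Nat.eq_zero_or_pos m with rfl | hm
    · simp
    · have hmod : (q ^ n - 1) % (q ^ m - 1) = q ^ (n % m) - 1 := by
        set r := n % m with hr
        set k := n / m with hk
        have h1 : q ^ m - 1 ∣ q ^ (m * k) - 1 := by
          simpa [pow_mul] using Nat.sub_dvd_pow_sub_pow (q ^ m) 1 k
        obtain ⟨t, ht⟩ := h1
        have h1le : 1 ≤ q ^ r := Nat.one_le_pow _ _ (by omega)
        have h2 : q ^ n - 1 = (q ^ m - 1) * (t * q ^ r) + (q ^ r - 1) := by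
          have e1 : (q ^ m - 1) * (t * q ^ r) = (q ^ (m * k) - 1) * q ^ r := by
            rw [← mul_assoc, ← ht]
          rw [e1, Nat.sub_mul, one_mul, ← pow_add]
          have e2 : m * k + r = n := by rw [hk, hr]; exact Nat.div_add_mod n m
          rw [e2]
          have : q ^ r ≤ q ^ n :=
            Nat.pow_le_pow_right (by omega) (by rw [hr]; exact Nat.mod_le n m)
          omega
        have hlt : q ^ r - 1 < q ^ m - 1 := by
          have : q ^ r < q ^ m := Nat.pow_lt_pow_right (by omega) (Nat.mod_lt n hm)
          omega
        rw [h2, Nat.add_comm, Nat.add_mul_mod_self_left, Nat.mod_eq_of_lt hlt]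
      rw [Nat.gcd_rec (q ^ m - 1) (q ^ n - 1), hmod, ih (n % m) (Nat.mod_lt n hm) m,
        Nat.gcd_rec m n]

end aux

theorem stmt_18 (q n₁ n₂ n₃ : ℕ) (hq : 2 ≤ q) (h₁ : 0 < n₁) (h₂ : 0 < n₂) (h₃ : 0 < n₃)
    (hgcd : Nat.gcd n₁ (Nat.gcd n₂ n₃) = 1) :
    Nonempty ((ZMod (q ^ n₁ - 1) × ZMod (q ^ n₂ - 1) × ZMod (q ^ n₃ - 1)) ≃+
      (ZMod (q - 1) ×
       ZMod (Nat.lcm (q ^ n₁ - 1) (q ^ (Nat.gcd n₂ n₃) - 1)) ×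
       ZMod (Nat.lcm (q ^ n₂ - 1) (q ^ n₃ - 1)))) := by
  have hpow : ∀ k : ℕ, 0 < k → q ^ k - 1 ≠ 0 := by
    intro k hk
    have : 2 ≤ q ^ k := le_trans hq (Nat.le_self_pow hk.ne' q)
    omega
  have hA := hpow n₁ h₁
  have hB := hpow n₂ h₂
  have hC := hpow n₃ h₃
  have hg : 0 < Nat.gcd n₂ n₃ := Nat.gcd_pos_of_pos_left n₃ h₂
  have hG := hpow _ hg
  obtain ⟨e₁⟩ := aux_key (q ^ n₂ - 1) (q ^ n₃ - 1) hB hC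
  rw [aux_gcd_pow_sub_one q hq n₂ n₃] at e₁
  obtain ⟨e₂⟩ := aux_key (q ^ n₁ - 1) (q ^ Nat.gcd n₂ n₃ - 1) hA hG
  rw [aux_gcd_pow_sub_one q hq n₁ (Nat.gcd n₂ n₃), hgcd, pow_one] at e₂
  exact ⟨((((AddEquiv.refl (ZMod (q ^ n₁ - 1))).prodCongr e₁).trans
      (AddEquiv.prodAssoc).symm).trans
      (e₂.prodCongr (AddEquiv.refl _))).trans AddEquiv.prodAssoc⟩
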